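/- Let T_N^* be the maximum of T_N over the admissible simplex and T_∞^* = sup over admissible infinite sequences of T_∞. Then for every N, T_∞^* - ε_N ≤ T_N^* ≤ T_∞^*, where ε_N = ((1-p)^{w+N}/2)[log(1+γB) + p·w·log(1+γB/w)]; consequently lim_{N→∞} T_N^* = T_∞^*, and T_∞^* is finite. -/

import Mathlib

open Real

/-- The finite-horizon throughput functional `T_N` (log base 2), evaluated at a
sequence indexed from 1 (only coordinates `1,…,N` matter). -/
noncomputable def TN (B γ p : ℝ) (w N : ℕ) (ξ : ℕ → ℝ) : ℝ :=
  (∑ k ∈ Finset.Icc 1 w, p ^ 2 * (1 - p) ^ (k - 1) * ((k : ℝ) / 2) *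
      Real.logb 2 (1 + γ * B / k))
  + (∑ j ∈ Finset.Icc 1 N, p * (1 - p) ^ (j + w - 1) * (1 / 2) *
      Real.logb 2 (1 + γ * ξ j))
  + (∑ k ∈ Finset.Icc 1 N, p ^ 2 * (1 - p) ^ (k + w - 1) * ((w : ℝ) / 2) *
      Real.logb 2 (1 + (γ / w) * (B - ∑ j ∈ Finset.Icc 1 k, ξ j)))
  + p * (1 - p) ^ (w + N) * ((w : ℝ) / 2) *
      Real.logb 2 (1 + (γ / w) * (B - ∑ j ∈ Finset.Icc 1 N, ξ j))

/-- The admissible simplex `{ξ : ξ_j ≥ 0, ∑_{j=1}^N ξ_j ≤ B}`, as sequences supported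
on coordinates `1,…,N`. -/
def adm (B : ℝ) (N : ℕ) : Set (ℕ → ℝ) :=
  {ξ | (∀ j, 1 ≤ j → j ≤ N → 0 ≤ ξ j) ∧ (∀ j, j = 0 ∨ N < j → ξ j = 0)
      ∧ ∑ j ∈ Finset.Icc 1 N, ξ j ≤ B}

/-- The infinite-horizon throughput functional `T_∞` (log base 2), at a sequence
indexed from 1. -/
noncomputable def Tinf (B γ p : ℝ) (w : ℕ) (x : ℕ → ℝ) : ℝ :=
  (∑ k ∈ Finset.Icc 1 w, p ^ 2 * (1 - p) ^ (k - 1) * ((k : ℝ) / 2) *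
      Real.logb 2 (1 + γ * B / k))
  + (∑' j : ℕ, p * (1 - p) ^ ((j + 1) + w - 1) * (1 / 2) *
      Real.logb 2 (1 + γ * x (j + 1)))
  + (∑' k : ℕ, p ^ 2 * (1 - p) ^ ((k + 1) + w - 1) * ((w : ℝ) / 2) *
      Real.logb 2 (1 + (γ / w) * (B - ∑ i ∈ Finset.Icc 1 (k + 1), x i)))

/-- Admissible infinite sequences: nonnegative with all partial sums at most `B`. -/
def admInf (B : ℝ) : Set (ℕ → ℝ) :=
  {x | (∀ j, 1 ≤ j → 0 ≤ x j) ∧ ∀ N, ∑ j ∈ Finset.Icc 1 N, x j ≤ B}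

private lemma sum_Icc_to_range (N : ℕ) (f : ℕ → ℝ) :
    ∑ j ∈ Finset.Icc 1 N, f j = ∑ i ∈ Finset.range N, f (i + 1) := by
  rw [← Finset.Ico_add_one_right_eq_Icc, Finset.sum_Ico_eq_sum_range]
  exact Finset.sum_congr (by norm_num) fun i _ => by rw [Nat.add_comm]

private lemma summ_aux {p : ℝ} (hp : 0 < p) (hp1 : p < 1) (m : ℕ) (c L : ℝ)
    (hc : 0 ≤ c) (u : ℕ → ℝ) (hu0 : ∀ j, 0 ≤ u j) (huL : ∀ j, u j ≤ L) :
    Summable (fun j : ℕ => c * (1 - p) ^ (j + m) * u j) := by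
  have hr0 : (0:ℝ) ≤ 1 - p := by linarith
  have hr1 : 1 - p < 1 := by linarith
  refine Summable.of_nonneg_of_le ?_ ?_
    ((summable_geometric_of_lt_one hr0 hr1).mul_left (c * (1 - p) ^ m * L))
  · intro j
    exact mul_nonneg (mul_nonneg hc (pow_nonneg hr0 _)) (hu0 j)
  · intro j
    calc c * (1 - p) ^ (j + m) * u j
        = (c * (1 - p) ^ m * (1 - p) ^ j) * u j := by rw [pow_add]; ring
      _ ≤ (c * (1 - p) ^ m * (1 - p) ^ j) * L := by
          apply mul_le_mul_of_nonneg_left (huL j)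
          exact mul_nonneg (mul_nonneg hc (pow_nonneg hr0 _)) (pow_nonneg hr0 _)
      _ = (c * (1 - p) ^ m * L) * (1 - p) ^ j := by ring

private lemma tsum_le_aux {p : ℝ} (hp : 0 < p) (hp1 : p < 1) (m : ℕ) (c L : ℝ)
    (hc : 0 ≤ c) (u : ℕ → ℝ) (hu0 : ∀ j, 0 ≤ u j) (huL : ∀ j, u j ≤ L) :
    (∑' j : ℕ, c * (1 - p) ^ (j + m) * u j) ≤ c * (1 - p) ^ m * L / p := by
  have hr0 : (0:ℝ) ≤ 1 - p := by linarith
  have hr1 : 1 - p < 1 := by linarith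
  have hL : 0 ≤ L := le_trans (hu0 0) (huL 0)
  have hg : Summable (fun j : ℕ => (c * (1 - p) ^ m * L) * (1 - p) ^ j) :=
    (summable_geometric_of_lt_one hr0 hr1).mul_left _
  have h1 : (∑' j : ℕ, c * (1 - p) ^ (j + m) * u j)
      ≤ ∑' j : ℕ, (c * (1 - p) ^ m * L) * (1 - p) ^ j := by
    apply Summable.tsum_le_tsum _ (summ_aux hp hp1 m c L hc u hu0 huL) hg
    intro j
    calc c * (1 - p) ^ (j + m) * u j
        = (c * (1 - p) ^ m * (1 - p) ^ j) * u j := by rw [pow_add]; ring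
      _ ≤ (c * (1 - p) ^ m * (1 - p) ^ j) * L := by
          apply mul_le_mul_of_nonneg_left (huL j)
          exact mul_nonneg (mul_nonneg hc (pow_nonneg hr0 _)) (pow_nonneg hr0 _)
      _ = (c * (1 - p) ^ m * L) * (1 - p) ^ j := by ring
  rw [tsum_mul_left, tsum_geometric_of_lt_one hr0 hr1] at h1
  have : (1 - (1 - p))⁻¹ = p⁻¹ := by norm_num
  rw [this] at h1
  linarith [h1, (by field_simp : c * (1 - p) ^ m * L * p⁻¹ = c * (1 - p) ^ m * L / p)]

private lemma tsum_const_aux {p : ℝ} (hp : 0 < p) (hp1 : p < 1) (m : ℕ) (c d : ℝ) :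
    (∑' j : ℕ, c * (1 - p) ^ (j + m) * d) = c * (1 - p) ^ m * d / p := by
  have hr0 : (0:ℝ) ≤ 1 - p := by linarith
  have hr1 : 1 - p < 1 := by linarith
  have h : (fun j : ℕ => c * (1 - p) ^ (j + m) * d)
      = fun j : ℕ => (c * (1 - p) ^ m * d) * (1 - p) ^ j := by
    funext j; rw [pow_add]; ring
  rw [h, tsum_mul_left, tsum_geometric_of_lt_one hr0 hr1]
  have hpne : p ≠ 0 := ne_of_gt hp
  rw [sub_sub_cancel]
  field_simp

private def trunc (N : ℕ) (x : ℕ → ℝ) : ℕ → ℝ := fun j => if 1 ≤ j ∧ j ≤ N then x j else 0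

private lemma S_nonneg {B : ℝ} {x : ℕ → ℝ} (hx : x ∈ admInf B) (k : ℕ) :
    0 ≤ ∑ j ∈ Finset.Icc 1 k, x j :=
  Finset.sum_nonneg fun j hj => hx.1 j (Finset.mem_Icc.mp hj).1

private lemma x_le_B {B : ℝ} {x : ℕ → ℝ} (hx : x ∈ admInf B) {j : ℕ} (hj : 1 ≤ j) :
    x j ≤ B := by
  refine le_trans ?_ (hx.2 j)
  exact Finset.single_le_sum (fun i hi => hx.1 i (Finset.mem_Icc.mp hi).1)
    (Finset.mem_Icc.mpr ⟨hj, le_refl j⟩)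

private lemma logb_bdd {γ B t : ℝ} (hγ : 0 < γ) (hB : 0 < B) (h0 : 0 ≤ t) (h1 : t ≤ B) :
    0 ≤ logb 2 (1 + γ * t) ∧ logb 2 (1 + γ * t) ≤ logb 2 (1 + γ * B) := by
  constructor
  · exact Real.logb_nonneg one_lt_two (by nlinarith)
  · exact Real.logb_le_logb_of_le one_lt_two (by nlinarith) (by nlinarith)

private lemma trunc_mem_adm {B : ℝ} {x : ℕ → ℝ} (hx : x ∈ admInf B) (N : ℕ) :
    trunc N x ∈ adm B N := by
  simp only [adm, Set.mem_setOf_eq]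
  refine ⟨fun j h1 h2 => ?_, fun j hj => ?_, ?_⟩
  · show 0 ≤ if 1 ≤ j ∧ j ≤ N then x j else 0
    rw [if_pos ⟨h1, h2⟩]; exact hx.1 j h1
  · show (if 1 ≤ j ∧ j ≤ N then x j else 0) = 0
    rw [if_neg]; omega
  · have h : ∑ j ∈ Finset.Icc 1 N, trunc N x j = ∑ j ∈ Finset.Icc 1 N, x j :=
      Finset.sum_congr rfl fun j hj => by
        simp only [trunc, if_pos (Finset.mem_Icc.mp hj)]
    rw [h]; exact hx.2 N

private lemma adm_subset_admInf {B : ℝ} {N : ℕ} {ξ : ℕ → ℝ} (hξ : ξ ∈ adm B N) :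
    ξ ∈ admInf B := by
  obtain ⟨h1, h2, h3⟩ := hξ
  have hnn : ∀ j, 1 ≤ j → 0 ≤ ξ j := by
    intro j hj
    by_cases h : j ≤ N
    · exact h1 j hj h
    · exact le_of_eq (h2 j (Or.inr (by omega))).symm
  refine ⟨hnn, fun M => ?_⟩
  by_cases h : M ≤ N
  · refine le_trans (Finset.sum_le_sum_of_subset_of_nonneg ?_ ?_) h3
    · exact Finset.Icc_subset_Icc_right h
    · exact fun i hi _ => hnn i (Finset.mem_Icc.mp hi).1
  · have he : ∑ j ∈ Finset.Icc 1 M, ξ j = ∑ j ∈ Finset.Icc 1 N, ξ j := by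
      symm
      refine Finset.sum_subset (Finset.Icc_subset_Icc_right (by omega)) ?_
      intro i hi hni
      have h1i := Finset.mem_Icc.mp hi
      have : N < i := by
        by_contra hc
        exact hni (Finset.mem_Icc.mpr ⟨h1i.1, by omega⟩)
      exact h2 i (Or.inr this)
    rw [he]; exact h3
private lemma Tinf_decomp (B γ p : ℝ) (w N : ℕ) (hB : 0 < B) (hγ : 0 < γ)
    (hw : 1 ≤ w) (hp : 0 < p) (hp1 : p < 1) (x : ℕ → ℝ) (hx : x ∈ admInf B) :
    Tinf B γ p w x = TN B γ p w N (trunc N x)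
      + (∑' j : ℕ, p * (1 - p) ^ (j + (N + w)) *
          ((1/2) * Real.logb 2 (1 + γ * x (j + N + 1))))
      + (∑' k : ℕ, p ^ 2 * (1 - p) ^ (k + (N + w)) *
          (((w:ℝ)/2) * Real.logb 2 (1 + (γ / w) * (B - ∑ i ∈ Finset.Icc 1 (k + N + 1), x i))))
      - p * (1 - p) ^ (w + N) * ((w:ℝ)/2) *
          Real.logb 2 (1 + (γ / w) * (B - ∑ j ∈ Finset.Icc 1 N, x j)) := by
  have hwpos : (0:ℝ) < w := by exact_mod_cast hw
  have hγw : 0 < γ / w := div_pos hγ hwpos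
  -- bounds for the log terms
  have hu2 : ∀ j : ℕ, 0 ≤ (1/2) * Real.logb 2 (1 + γ * x (j + 1)) := by
    intro j
    have h := logb_bdd hγ hB (hx.1 (j+1) (by omega)) (x_le_B hx (by omega))
    linarith [h.1]
  have hu2' : ∀ j : ℕ, (1/2) * Real.logb 2 (1 + γ * x (j + 1))
      ≤ (1/2) * Real.logb 2 (1 + γ * B) := by
    intro j
    have h := logb_bdd hγ hB (hx.1 (j+1) (by omega)) (x_le_B hx (by omega))
    linarith [h.2]
  have hu3 : ∀ k : ℕ, 0 ≤ ((w:ℝ)/2) *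
      Real.logb 2 (1 + (γ / w) * (B - ∑ i ∈ Finset.Icc 1 (k + 1), x i)) := by
    intro k
    have h := logb_bdd (t := B - ∑ i ∈ Finset.Icc 1 (k + 1), x i) hγw hB (by linarith [hx.2 (k+1)]) (by linarith [S_nonneg hx (k+1)])
    have : (0:ℝ) ≤ (w:ℝ)/2 := by positivity
    exact mul_nonneg this h.1
  have hu3' : ∀ k : ℕ, ((w:ℝ)/2) *
      Real.logb 2 (1 + (γ / w) * (B - ∑ i ∈ Finset.Icc 1 (k + 1), x i))
      ≤ ((w:ℝ)/2) * Real.logb 2 (1 + (γ / w) * B) := by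
    intro k
    have h := logb_bdd (t := B - ∑ i ∈ Finset.Icc 1 (k + 1), x i) hγw hB (by linarith [hx.2 (k+1)]) (by linarith [S_nonneg hx (k+1)])
    have hw2 : (0:ℝ) ≤ (w:ℝ)/2 := by positivity
    exact mul_le_mul_of_nonneg_left h.2 hw2
  have hs2 : Summable (fun j : ℕ => p * (1 - p) ^ (j + w) *
      ((1/2) * Real.logb 2 (1 + γ * x (j + 1)))) :=
    summ_aux hp hp1 w p _ hp.le _ hu2 hu2'
  have hs3 : Summable (fun k : ℕ => p ^ 2 * (1 - p) ^ (k + w) *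
      (((w:ℝ)/2) * Real.logb 2 (1 + (γ / w) * (B - ∑ i ∈ Finset.Icc 1 (k + 1), x i)))) :=
    summ_aux hp hp1 w (p^2) _ (by positivity) _ hu3 hu3'
  have key2 : (∑' j : ℕ, p * (1 - p) ^ ((j + 1) + w - 1) * (1 / 2) *
        Real.logb 2 (1 + γ * x (j + 1)))
      = (∑ j ∈ Finset.Icc 1 N, p * (1 - p) ^ (j + w - 1) * (1 / 2) *
          Real.logb 2 (1 + γ * trunc N x j))
        + (∑' j : ℕ, p * (1 - p) ^ (j + (N + w)) *
            ((1/2) * Real.logb 2 (1 + γ * x (j + N + 1)))) := by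
    have e1 : (∑' j : ℕ, p * (1 - p) ^ ((j + 1) + w - 1) * (1 / 2) *
          Real.logb 2 (1 + γ * x (j + 1)))
        = ∑' j : ℕ, p * (1 - p) ^ (j + w) * ((1/2) * Real.logb 2 (1 + γ * x (j + 1))) :=
      tsum_congr fun j => by rw [show (j + 1) + w - 1 = j + w from by omega]; ring
    rw [e1, ← Summable.sum_add_tsum_nat_add N hs2]
    congr 1
    · rw [sum_Icc_to_range]
      refine Finset.sum_congr rfl fun i hi => ?_
      have hiN : i < N := Finset.mem_range.mp hi
      rw [show trunc N x (i+1) = x (i+1) from if_pos ⟨by omega, by omega⟩,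
        show i + 1 + w - 1 = i + w from by omega]
      ring
    · exact tsum_congr fun j => by
        rw [show j + N + w = j + (N + w) from by omega]
  have key3 : (∑' k : ℕ, p ^ 2 * (1 - p) ^ ((k + 1) + w - 1) * ((w:ℝ) / 2) *
        Real.logb 2 (1 + (γ / w) * (B - ∑ i ∈ Finset.Icc 1 (k + 1), x i)))
      = (∑ k ∈ Finset.Icc 1 N, p ^ 2 * (1 - p) ^ (k + w - 1) * ((w:ℝ) / 2) *
          Real.logb 2 (1 + (γ / w) * (B - ∑ j ∈ Finset.Icc 1 k, trunc N x j)))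
        + (∑' k : ℕ, p ^ 2 * (1 - p) ^ (k + (N + w)) *
            (((w:ℝ)/2) * Real.logb 2 (1 + (γ / w) *
              (B - ∑ i ∈ Finset.Icc 1 (k + N + 1), x i)))) := by
    have e1 : (∑' k : ℕ, p ^ 2 * (1 - p) ^ ((k + 1) + w - 1) * ((w:ℝ) / 2) *
          Real.logb 2 (1 + (γ / w) * (B - ∑ i ∈ Finset.Icc 1 (k + 1), x i)))
        = ∑' k : ℕ, p ^ 2 * (1 - p) ^ (k + w) *
            (((w:ℝ)/2) * Real.logb 2 (1 + (γ / w) * (B - ∑ i ∈ Finset.Icc 1 (k + 1), x i))) :=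
      tsum_congr fun k => by rw [show (k + 1) + w - 1 = k + w from by omega]; ring
    rw [e1, ← Summable.sum_add_tsum_nat_add N hs3]
    congr 1
    · rw [sum_Icc_to_range]
      refine Finset.sum_congr rfl fun i hi => ?_
      have hiN : i < N := Finset.mem_range.mp hi
      have hsum : ∑ j ∈ Finset.Icc 1 (i+1), trunc N x j = ∑ j ∈ Finset.Icc 1 (i+1), x j :=
        Finset.sum_congr rfl fun j hj => by
          have hj' := Finset.mem_Icc.mp hj
          exact if_pos ⟨hj'.1, by omega⟩
      rw [hsum, show i + 1 + w - 1 = i + w from by omega]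
      ring
    · exact tsum_congr fun k => by
        rw [show k + N + w = k + (N + w) from by omega,
          show k + N + 1 = k + N + 1 from rfl]
  have hS : ∑ j ∈ Finset.Icc 1 N, trunc N x j = ∑ j ∈ Finset.Icc 1 N, x j :=
    Finset.sum_congr rfl fun j hj => if_pos (Finset.mem_Icc.mp hj)
  simp only [Tinf, TN]
  rw [key2, key3, hS]
  ring
private lemma Tinf_eq_TN (B γ p : ℝ) (w N : ℕ) (hB : 0 < B) (hγ : 0 < γ)
    (hw : 1 ≤ w) (hp : 0 < p) (hp1 : p < 1) (ξ : ℕ → ℝ) (hξ : ξ ∈ adm B N) :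
    Tinf B γ p w ξ = TN B γ p w N ξ := by
  obtain ⟨h1, h2, h3⟩ := hξ
  have hxInf : ξ ∈ admInf B := adm_subset_admInf ⟨h1, h2, h3⟩
  have htr : trunc N ξ = ξ := by
    funext j
    by_cases hc : 1 ≤ j ∧ j ≤ N
    · exact if_pos hc
    · show (if 1 ≤ j ∧ j ≤ N then ξ j else 0) = ξ j
      rw [if_neg hc, h2 j (by omega)]
  have hd := Tinf_decomp B γ p w N hB hγ hw hp hp1 ξ hxInf
  have htail2 : (∑' j : ℕ, p * (1 - p) ^ (j + (N + w)) *
      ((1/2) * Real.logb 2 (1 + γ * ξ (j + N + 1)))) = 0 := by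
    have e : ∀ j : ℕ, p * (1 - p) ^ (j + (N + w)) *
        ((1/2) * Real.logb 2 (1 + γ * ξ (j + N + 1))) = 0 := by
      intro j
      rw [h2 (j + N + 1) (Or.inr (by omega))]
      simp
    rw [tsum_congr e, tsum_zero]
  have hScst : ∀ k : ℕ, ∑ i ∈ Finset.Icc 1 (k + N + 1), ξ i = ∑ j ∈ Finset.Icc 1 N, ξ j := by
    intro k
    symm
    refine Finset.sum_subset (Finset.Icc_subset_Icc_right (by omega)) ?_
    intro i hi hni
    have h1i := Finset.mem_Icc.mp hi
    refine h2 i (Or.inr ?_)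
    by_contra hc
    exact hni (Finset.mem_Icc.mpr ⟨h1i.1, by omega⟩)
  have htail3 : (∑' k : ℕ, p ^ 2 * (1 - p) ^ (k + (N + w)) *
        (((w:ℝ)/2) * Real.logb 2 (1 + (γ / w) *
          (B - ∑ i ∈ Finset.Icc 1 (k + N + 1), ξ i))))
      = p * (1 - p) ^ (w + N) * ((w:ℝ)/2) *
          Real.logb 2 (1 + (γ / w) * (B - ∑ j ∈ Finset.Icc 1 N, ξ j)) := by
    have e : ∀ k : ℕ, p ^ 2 * (1 - p) ^ (k + (N + w)) *
        (((w:ℝ)/2) * Real.logb 2 (1 + (γ / w) *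
          (B - ∑ i ∈ Finset.Icc 1 (k + N + 1), ξ i)))
        = p ^ 2 * (1 - p) ^ (k + (N + w)) *
        (((w:ℝ)/2) * Real.logb 2 (1 + (γ / w) *
          (B - ∑ j ∈ Finset.Icc 1 N, ξ j))) := fun k => by rw [hScst k]
    rw [tsum_congr e, tsum_const_aux hp hp1 (N + w) (p^2) _]
    rw [show N + w = w + N from by omega]
    field_simp
  rw [hd, htr, htail2, htail3]
  ring

private lemma Tinf_le_TN_add (B γ p : ℝ) (w N : ℕ) (hB : 0 < B) (hγ : 0 < γ)
    (hw : 1 ≤ w) (hp : 0 < p) (hp1 : p < 1) (x : ℕ → ℝ) (hx : x ∈ admInf B) :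
    Tinf B γ p w x ≤ TN B γ p w N (trunc N x)
      + ((1 - p) ^ (w + N) / 2) *
          (Real.logb 2 (1 + γ * B) + p * w * Real.logb 2 (1 + γ * B / w)) := by
  have hwpos : (0:ℝ) < w := by exact_mod_cast hw
  have hγw : 0 < γ / w := div_pos hγ hwpos
  have hr0 : (0:ℝ) ≤ 1 - p := by linarith
  have hd := Tinf_decomp B γ p w N hB hγ hw hp hp1 x hx
  have ht2 : (∑' j : ℕ, p * (1 - p) ^ (j + (N + w)) *
      ((1/2) * Real.logb 2 (1 + γ * x (j + N + 1))))
      ≤ p * (1 - p) ^ (N + w) * ((1/2) * Real.logb 2 (1 + γ * B)) / p := by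
    refine tsum_le_aux hp hp1 (N + w) p _ hp.le _ ?_ ?_
    · intro j
      have h := logb_bdd hγ hB (hx.1 (j+N+1) (by omega)) (x_le_B hx (by omega))
      linarith [h.1]
    · intro j
      have h := logb_bdd hγ hB (hx.1 (j+N+1) (by omega)) (x_le_B hx (by omega))
      linarith [h.2]
  have ht3 : (∑' k : ℕ, p ^ 2 * (1 - p) ^ (k + (N + w)) *
      (((w:ℝ)/2) * Real.logb 2 (1 + (γ / w) * (B - ∑ i ∈ Finset.Icc 1 (k + N + 1), x i))))
      ≤ p ^ 2 * (1 - p) ^ (N + w) * (((w:ℝ)/2) * Real.logb 2 (1 + (γ / w) * B)) / p := by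
    refine tsum_le_aux hp hp1 (N + w) (p^2) _ (by positivity) _ ?_ ?_
    · intro k
      have h := logb_bdd (t := B - ∑ i ∈ Finset.Icc 1 (k + N + 1), x i) hγw hB
        (by linarith [hx.2 (k+N+1)]) (by linarith [S_nonneg hx (k+N+1)])
      have hw2 : (0:ℝ) ≤ (w:ℝ)/2 := by positivity
      exact mul_nonneg hw2 h.1
    · intro k
      have h := logb_bdd (t := B - ∑ i ∈ Finset.Icc 1 (k + N + 1), x i) hγw hB
        (by linarith [hx.2 (k+N+1)]) (by linarith [S_nonneg hx (k+N+1)])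
      have hw2 : (0:ℝ) ≤ (w:ℝ)/2 := by positivity
      exact mul_le_mul_of_nonneg_left h.2 hw2
  have hcorr : 0 ≤ p * (1 - p) ^ (w + N) * ((w:ℝ)/2) *
      Real.logb 2 (1 + (γ / w) * (B - ∑ j ∈ Finset.Icc 1 N, x j)) := by
    have h := logb_bdd (t := B - ∑ j ∈ Finset.Icc 1 N, x j) hγw hB
      (by linarith [hx.2 N]) (by linarith [S_nonneg hx N])
    have : (0:ℝ) ≤ p * (1 - p) ^ (w + N) * ((w:ℝ)/2) := by positivity
    exact mul_nonneg this h.1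
  have hA : p * (1 - p) ^ (N + w) * ((1/2) * Real.logb 2 (1 + γ * B)) / p
      = ((1 - p) ^ (w + N) / 2) * Real.logb 2 (1 + γ * B) := by
    rw [show N + w = w + N from by omega]
    field_simp
  have hL2 : (1 : ℝ) + (γ / w) * B = 1 + γ * B / w := by ring
  have hC : p ^ 2 * (1 - p) ^ (N + w) * (((w:ℝ)/2) * Real.logb 2 (1 + (γ / w) * B)) / p
      = ((1 - p) ^ (w + N) / 2) * (p * w * Real.logb 2 (1 + γ * B / w)) := by
    rw [show N + w = w + N from by omega, hL2]
    field_simp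
  have hsplit : ((1 - p) ^ (w + N) / 2) *
      (Real.logb 2 (1 + γ * B) + p * w * Real.logb 2 (1 + γ * B / w))
      = ((1 - p) ^ (w + N) / 2) * Real.logb 2 (1 + γ * B)
        + ((1 - p) ^ (w + N) / 2) * (p * w * Real.logb 2 (1 + γ * B / w)) := by ring
  rw [hd, hsplit]
  linarith [ht2, ht3, hcorr, hA.le, hA.ge, hC.le, hC.ge]

private lemma Tinf_bound (B γ p : ℝ) (w : ℕ) (hB : 0 < B) (hγ : 0 < γ)
    (hw : 1 ≤ w) (hp : 0 < p) (hp1 : p < 1) (x : ℕ → ℝ) (hx : x ∈ admInf B) :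
    Tinf B γ p w x ≤ (∑ k ∈ Finset.Icc 1 w, p ^ 2 * (1 - p) ^ (k - 1) * ((k : ℝ) / 2) *
        Real.logb 2 (1 + γ * B / k))
      + p * (1 - p) ^ w * ((1/2) * Real.logb 2 (1 + γ * B)) / p
      + p ^ 2 * (1 - p) ^ w * (((w:ℝ)/2) * Real.logb 2 (1 + (γ / w) * B)) / p := by
  have hwpos : (0:ℝ) < w := by exact_mod_cast hw
  have hγw : 0 < γ / w := div_pos hγ hwpos
  have e1 : (∑' j : ℕ, p * (1 - p) ^ ((j + 1) + w - 1) * (1 / 2) *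
        Real.logb 2 (1 + γ * x (j + 1)))
      = ∑' j : ℕ, p * (1 - p) ^ (j + w) * ((1/2) * Real.logb 2 (1 + γ * x (j + 1))) :=
    tsum_congr fun j => by rw [show (j + 1) + w - 1 = j + w from by omega]; ring
  have e2 : (∑' k : ℕ, p ^ 2 * (1 - p) ^ ((k + 1) + w - 1) * ((w:ℝ) / 2) *
        Real.logb 2 (1 + (γ / w) * (B - ∑ i ∈ Finset.Icc 1 (k + 1), x i)))
      = ∑' k : ℕ, p ^ 2 * (1 - p) ^ (k + w) *
          (((w:ℝ)/2) * Real.logb 2 (1 + (γ / w) * (B - ∑ i ∈ Finset.Icc 1 (k + 1), x i))) :=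
    tsum_congr fun k => by rw [show (k + 1) + w - 1 = k + w from by omega]; ring
  have ht2 : (∑' j : ℕ, p * (1 - p) ^ (j + w) * ((1/2) * Real.logb 2 (1 + γ * x (j + 1))))
      ≤ p * (1 - p) ^ w * ((1/2) * Real.logb 2 (1 + γ * B)) / p := by
    refine tsum_le_aux hp hp1 w p _ hp.le _ ?_ ?_
    · intro j
      have h := logb_bdd hγ hB (hx.1 (j+1) (by omega)) (x_le_B hx (by omega))
      linarith [h.1]
    · intro j
      have h := logb_bdd hγ hB (hx.1 (j+1) (by omega)) (x_le_B hx (by omega))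
      linarith [h.2]
  have ht3 : (∑' k : ℕ, p ^ 2 * (1 - p) ^ (k + w) *
      (((w:ℝ)/2) * Real.logb 2 (1 + (γ / w) * (B - ∑ i ∈ Finset.Icc 1 (k + 1), x i))))
      ≤ p ^ 2 * (1 - p) ^ w * (((w:ℝ)/2) * Real.logb 2 (1 + (γ / w) * B)) / p := by
    refine tsum_le_aux hp hp1 w (p^2) _ (by positivity) _ ?_ ?_
    · intro k
      have h := logb_bdd (t := B - ∑ i ∈ Finset.Icc 1 (k + 1), x i) hγw hB
        (by linarith [hx.2 (k+1)]) (by linarith [S_nonneg hx (k+1)])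
      have hw2 : (0:ℝ) ≤ (w:ℝ)/2 := by positivity
      exact mul_nonneg hw2 h.1
    · intro k
      have h := logb_bdd (t := B - ∑ i ∈ Finset.Icc 1 (k + 1), x i) hγw hB
        (by linarith [hx.2 (k+1)]) (by linarith [S_nonneg hx (k+1)])
      have hw2 : (0:ℝ) ≤ (w:ℝ)/2 := by positivity
      exact mul_le_mul_of_nonneg_left h.2 hw2
  simp only [Tinf]
  rw [e1, e2]
  linarith [ht2, ht3]
/-- `T_∞^* - ε_N ≤ T_N^* ≤ T_∞^*` with
`ε_N = ((1-p)^{w+N}/2)[log(1+γB) + p w log(1+γB/w)]`; consequently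
`T_N^* → T_∞^*`, and `T_∞^*` is finite (the image of `T_∞` is bounded above). -/
theorem TNstar_tendsto_Tinfstar (B γ p : ℝ) (w : ℕ) (hB : 0 < B) (hγ : 0 < γ)
    (hw : 1 ≤ w) (hp : 0 < p) (hp1 : p < 1) :
    BddAbove (Tinf B γ p w '' admInf B)
    ∧ (∀ N, 1 ≤ N →
        sSup (Tinf B γ p w '' admInf B)
            - ((1 - p) ^ (w + N) / 2) *
              (Real.logb 2 (1 + γ * B) + p * w * Real.logb 2 (1 + γ * B / w))
          ≤ sSup (TN B γ p w N '' adm B N)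
        ∧ sSup (TN B γ p w N '' adm B N) ≤ sSup (Tinf B γ p w '' admInf B))
    ∧ Filter.Tendsto (fun N => sSup (TN B γ p w N '' adm B N)) Filter.atTop
        (nhds (sSup (Tinf B γ p w '' admInf B))) := by
  have hr0 : (0:ℝ) ≤ 1 - p := by linarith
  have hr1 : 1 - p < 1 := by linarith
  -- the zero sequence is admissible
  have h0mem : (fun _ : ℕ => (0:ℝ)) ∈ admInf B := by
    refine ⟨fun j _ => le_refl 0, fun N => ?_⟩
    simp only [Finset.sum_const_zero]
    linarith
  have hneInf : (Tinf B γ p w '' admInf B).Nonempty :=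
    ⟨_, Set.mem_image_of_mem _ h0mem⟩
  -- boundedness of the Tinf image
  have hbdd : BddAbove (Tinf B γ p w '' admInf B) := by
    refine ⟨(∑ k ∈ Finset.Icc 1 w, p ^ 2 * (1 - p) ^ (k - 1) * ((k : ℝ) / 2) *
        Real.logb 2 (1 + γ * B / k))
      + p * (1 - p) ^ w * ((1/2) * Real.logb 2 (1 + γ * B)) / p
      + p ^ 2 * (1 - p) ^ w * (((w:ℝ)/2) * Real.logb 2 (1 + (γ / w) * B)) / p, ?_⟩
    rintro y ⟨x, hx, rfl⟩
    exact Tinf_bound B γ p w hB hγ hw hp hp1 x hx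
  -- the TN image is contained in the Tinf image
  have hsub : ∀ N : ℕ, TN B γ p w N '' adm B N ⊆ Tinf B γ p w '' admInf B := by
    intro N y hy
    obtain ⟨ξ, hξ, rfl⟩ := hy
    exact ⟨ξ, adm_subset_admInf hξ, Tinf_eq_TN B γ p w N hB hγ hw hp hp1 ξ hξ⟩
  have hbddTN : ∀ N : ℕ, BddAbove (TN B γ p w N '' adm B N) :=
    fun N => BddAbove.mono (hsub N) hbdd
  have hneTN : ∀ N : ℕ, (TN B γ p w N '' adm B N).Nonempty := by
    intro N
    exact ⟨_, Set.mem_image_of_mem _ (trunc_mem_adm h0mem N)⟩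
  -- right inequality
  have hright : ∀ N : ℕ, sSup (TN B γ p w N '' adm B N)
      ≤ sSup (Tinf B γ p w '' admInf B) :=
    fun N => csSup_le_csSup hbdd (hneTN N) (hsub N)
  -- left inequality
  have hleft : ∀ N : ℕ, sSup (Tinf B γ p w '' admInf B)
      - ((1 - p) ^ (w + N) / 2) *
        (Real.logb 2 (1 + γ * B) + p * w * Real.logb 2 (1 + γ * B / w))
      ≤ sSup (TN B γ p w N '' adm B N) := by
    intro N
    have h : sSup (Tinf B γ p w '' admInf B)
        ≤ sSup (TN B γ p w N '' adm B N)
          + ((1 - p) ^ (w + N) / 2) *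
            (Real.logb 2 (1 + γ * B) + p * w * Real.logb 2 (1 + γ * B / w)) := by
      refine csSup_le hneInf ?_
      rintro y ⟨x, hx, rfl⟩
      have h1 := Tinf_le_TN_add B γ p w N hB hγ hw hp hp1 x hx
      have h2 : TN B γ p w N (trunc N x) ≤ sSup (TN B γ p w N '' adm B N) :=
        le_csSup (hbddTN N) (Set.mem_image_of_mem _ (trunc_mem_adm hx N))
      linarith
    linarith
  refine ⟨hbdd, fun N _ => ⟨hleft N, hright N⟩, ?_⟩
  -- convergence
  have hεto : Filter.Tendsto (fun N : ℕ => ((1 - p) ^ (w + N) / 2) *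
      (Real.logb 2 (1 + γ * B) + p * w * Real.logb 2 (1 + γ * B / w)))
      Filter.atTop (nhds 0) := by
    have h1 : Filter.Tendsto (fun N : ℕ => (1 - p) ^ N) Filter.atTop (nhds 0) :=
      tendsto_pow_atTop_nhds_zero_of_lt_one hr0 hr1
    have h2 := h1.const_mul ((1 - p) ^ w / 2 *
      (Real.logb 2 (1 + γ * B) + p * w * Real.logb 2 (1 + γ * B / w)))
    simp only [mul_zero] at h2
    convert h2 using 2 with N
    rw [pow_add]
    ring
  have hlow : Filter.Tendsto (fun N : ℕ => sSup (Tinf B γ p w '' admInf B)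
      - ((1 - p) ^ (w + N) / 2) *
        (Real.logb 2 (1 + γ * B) + p * w * Real.logb 2 (1 + γ * B / w)))
      Filter.atTop (nhds (sSup (Tinf B γ p w '' admInf B))) := by
    have := Filter.Tendsto.sub
      (tendsto_const_nhds (x := sSup (Tinf B γ p w '' admInf B)) (f := Filter.atTop)) hεto
    simpa using this
  refine tendsto_of_tendsto_of_tendsto_of_le_of_le' hlow tendsto_const_nhds ?_ ?_
  · exact Filter.Eventually.of_forall hleft
  · exact Filter.Eventually.of_forall hright
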